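/- Let Q be n×n symmetric positive definite, R m×m symmetric positive definite, M n×n symmetric positive definite, λ ∈ (0,1], and Y an m×m symmetric positive definite matrix. Then the following are equivalent: (i) there exists a symmetric matrix X with 0 < X ≤ M and g_{λ,R+Y⁻¹}(X) ≤ X; (ii) there exists a symmetric positive definite matrix S such that Ψ(S,Y) ≥ 0 and the block matrix [[S, I],[I, M]] is positive semidefinite. (Core feasibility equivalence of Theorem 2, proved in Appendix D.) -/

import Mathlib

open Matrix

/-- The modified Riccati operator
`g_{θ,W}(X) = A X Aᵀ + Q − θ A X Cᵀ (C X Cᵀ + W)⁻¹ C X Aᵀ`. -/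
noncomputable def gRic {n m : ℕ} (A Q : Matrix (Fin n) (Fin n) ℝ)
    (C : Matrix (Fin m) (Fin n) ℝ) (W : Matrix (Fin m) (Fin m) ℝ) (θ : ℝ)
    (X : Matrix (Fin n) (Fin n) ℝ) : Matrix (Fin n) (Fin n) ℝ :=
  A * X * Aᵀ + Q - θ • (A * X * Cᵀ * (C * X * Cᵀ + W)⁻¹ * (C * X * Aᵀ))

/-- The symmetric 5×5 block matrix `Ψ(S,Y)` of equation (10):
`[[S, √λ S A, √(1−λ) S A, S, 0],
  [√λ Aᵀ S, S + Cᵀ R⁻¹ C, 0, 0, Cᵀ R⁻¹],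
  [√(1−λ) Aᵀ S, 0, S, 0, 0],
  [S, 0, 0, Q⁻¹, 0],
  [0, R⁻¹ C, 0, 0, Y + R⁻¹]]`. -/
noncomputable def Psi {n m : ℕ} (A Q : Matrix (Fin n) (Fin n) ℝ)
    (C : Matrix (Fin m) (Fin n) ℝ) (R : Matrix (Fin m) (Fin m) ℝ) (lam : ℝ)
    (S : Matrix (Fin n) (Fin n) ℝ) (Y : Matrix (Fin m) (Fin m) ℝ) :
    Matrix (Fin n ⊕ (Fin n ⊕ (Fin n ⊕ (Fin n ⊕ Fin m))))
      (Fin n ⊕ (Fin n ⊕ (Fin n ⊕ (Fin n ⊕ Fin m)))) ℝ :=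
  Matrix.of fun i j =>
    match i, j with
    | .inl i, .inl j => S i j
    | .inl i, .inr (.inl j) => (Real.sqrt lam • (S * A)) i j
    | .inl i, .inr (.inr (.inl j)) => (Real.sqrt (1 - lam) • (S * A)) i j
    | .inl i, .inr (.inr (.inr (.inl j))) => S i j
    | .inl _, .inr (.inr (.inr (.inr _))) => 0
    | .inr (.inl i), .inl j => (Real.sqrt lam • (Aᵀ * S)) i j
    | .inr (.inl i), .inr (.inl j) => (S + Cᵀ * R⁻¹ * C) i j
    | .inr (.inl _), .inr (.inr (.inl _)) => 0
    | .inr (.inl _), .inr (.inr (.inr (.inl _))) => 0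
    | .inr (.inl i), .inr (.inr (.inr (.inr j))) => (Cᵀ * R⁻¹) i j
    | .inr (.inr (.inl i)), .inl j => (Real.sqrt (1 - lam) • (Aᵀ * S)) i j
    | .inr (.inr (.inl _)), .inr (.inl _) => 0
    | .inr (.inr (.inl i)), .inr (.inr (.inl j)) => S i j
    | .inr (.inr (.inl _)), .inr (.inr (.inr _)) => 0
    | .inr (.inr (.inr (.inl i))), .inl j => S i j
    | .inr (.inr (.inr (.inl _))), .inr (.inl _) => 0
    | .inr (.inr (.inr (.inl _))), .inr (.inr (.inl _)) => 0
    | .inr (.inr (.inr (.inl i))), .inr (.inr (.inr (.inl j))) => Q⁻¹ i j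
    | .inr (.inr (.inr (.inl _))), .inr (.inr (.inr (.inr _))) => 0
    | .inr (.inr (.inr (.inr _))), .inl _ => 0
    | .inr (.inr (.inr (.inr i))), .inr (.inl j) => (R⁻¹ * C) i j
    | .inr (.inr (.inr (.inr _))), .inr (.inr (.inl _)) => 0
    | .inr (.inr (.inr (.inr _))), .inr (.inr (.inr (.inl _))) => 0
    | .inr (.inr (.inr (.inr i))), .inr (.inr (.inr (.inr j))) => (Y + R⁻¹) i j

set_option linter.unusedSectionVars false
set_option maxHeartbeats 1000000

section AuxLemmas

variable {α β : Type*} [Fintype α] [Fintype β] [DecidableEq α] [DecidableEq β]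

lemma fromBlocksSub (a : Matrix α α ℝ) (b : Matrix α β ℝ) (c : Matrix β α ℝ) (d : Matrix β β ℝ)
    (a' : Matrix α α ℝ) (b' : Matrix α β ℝ) (c' : Matrix β α ℝ) (d' : Matrix β β ℝ) :
    fromBlocks a b c d - fromBlocks a' b' c' d' = fromBlocks (a - a') (b - b') (c - c') (d - d') := by
  ext (i | i) (j | j) <;> simp [fromBlocks]

lemma fromRows_fromColumns_zero {γ δ : Type*} (E : Matrix α β ℝ) :
    fromRows (fromCols E (0 : Matrix α γ ℝ)) (0 : Matrix δ (β ⊕ γ) ℝ) =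
      fromBlocks E 0 0 0 := by
  ext (i | i) (j | j) <;> simp [fromBlocks, fromRows_apply_inl, fromRows_apply_inr, fromCols_apply_inl, fromCols_apply_inr]

lemma fromColumns_fromRows_zero {γ δ : Type*} (E : Matrix α β ℝ) :
    fromCols (fromRows E (0 : Matrix δ β ℝ)) (0 : Matrix (α ⊕ δ) γ ℝ) =
      fromBlocks E 0 0 0 := by
  ext (i | i) (j | j) <;> simp [fromBlocks, fromRows_apply_inl, fromRows_apply_inr, fromCols_apply_inl, fromCols_apply_inr]

lemma posDef_fromBlocks_diag {A : Matrix α α ℝ} {D : Matrix β β ℝ}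
    (hA : A.PosDef) (hD : D.PosDef) : (fromBlocks A 0 0 D).PosDef := by
  rw [posDef_iff_dotProduct_mulVec]
  constructor
  · have h0 : (fromBlocks A 0 0 D)ᴴ = fromBlocks Aᴴ 0 0 Dᴴ := by
      rw [fromBlocks_conjTranspose]; simp
    rw [Matrix.IsHermitian, h0, hA.1.eq, hD.1.eq]
  · intro x hx
    have hxd : x = Sum.elim (x ∘ Sum.inl) (x ∘ Sum.inr) := by ext (i | i) <;> rfl
    have hne : x ∘ Sum.inl ≠ 0 ∨ x ∘ Sum.inr ≠ 0 := by
      by_contra h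
      push_neg at h
      apply hx
      rw [hxd, h.1, h.2]
      ext (i | i) <;> rfl
    rw [hxd, fromBlocks_mulVec, Function.star_sumElim, sumElim_dotProduct_sumElim]
    simp only [Matrix.zero_mulVec, add_zero, zero_add]
    rcases hne with h | h
    · exact add_pos_of_pos_of_nonneg (hA.dotProduct_mulVec_pos h) ((posSemidef_iff_dotProduct_mulVec.mp hD.posSemidef).2 _)
    · exact add_pos_of_nonneg_of_pos ((posSemidef_iff_dotProduct_mulVec.mp hA.posSemidef).2 _) (hD.dotProduct_mulVec_pos h)

lemma inv_fromBlocks_diag {A : Matrix α α ℝ} {D : Matrix β β ℝ}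
    (hA : IsUnit A.det) (hD : IsUnit D.det) :
    (fromBlocks A 0 0 D)⁻¹ = fromBlocks A⁻¹ 0 0 D⁻¹ := by
  apply Matrix.inv_eq_right_inv
  rw [fromBlocks_multiply]
  simp [Matrix.mul_nonsing_inv _ hA, Matrix.mul_nonsing_inv _ hD, ← fromBlocks_one]

lemma psd_congr {U K : Matrix α α ℝ} (hU : U.PosDef) (hUh : Uᴴ = U) :
    (U * K * U).PosSemidef ↔ K.PosSemidef := by
  haveI := hU.isUnit.invertible
  constructor
  · intro h
    have h2 := h.mul_mul_conjTranspose_same U⁻¹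
    have hUi : (U⁻¹)ᴴ = U⁻¹ := by
      rw [Matrix.conjTranspose_nonsing_inv, hUh]
    rw [hUi] at h2
    have : U⁻¹ * (U * K * U) * U⁻¹ = K := by
      rw [Matrix.mul_assoc U⁻¹ (U * K * U) U⁻¹, Matrix.mul_inv_cancel_right_of_invertible,
        ← Matrix.mul_assoc, Matrix.nonsing_inv_mul _ hU.det_pos.ne'.isUnit, Matrix.one_mul]
    rwa [this] at h2
  · intro h
    have h2 := h.mul_mul_conjTranspose_same U
    rwa [hUh] at h2

end AuxLemmas

lemma psi_iff {n m : ℕ}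
    (A Q : Matrix (Fin n) (Fin n) ℝ) (C : Matrix (Fin m) (Fin n) ℝ)
    (R Y : Matrix (Fin m) (Fin m) ℝ) (lam : ℝ)
    (hQ : Q.PosDef) (hR : R.PosDef) (hY : Y.PosDef)
    (hlam : lam ∈ Set.Ioc (0 : ℝ) 1)
    {S : Matrix (Fin n) (Fin n) ℝ} (hS : S.PosDef) :
    (Psi A Q C R lam S Y).PosSemidef ↔
      (S⁻¹ - gRic A Q C (R + Y⁻¹) lam S⁻¹).PosSemidef := by
  obtain ⟨hl0, hl1⟩ := hlam
  have hSd : IsUnit S.det := hS.det_pos.ne'.isUnit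
  have hQd : IsUnit Q.det := hQ.det_pos.ne'.isUnit
  have hRd : IsUnit R.det := hR.det_pos.ne'.isUnit
  have hYd : IsUnit Y.det := hY.det_pos.ne'.isUnit
  have hW : (R + Y⁻¹).PosDef := hR.add hY.inv
  have hZ : (Y + R⁻¹).PosDef := hY.add hR.inv
  have hWd : IsUnit (R + Y⁻¹).det := hW.det_pos.ne'.isUnit
  have hZd : IsUnit (Y + R⁻¹).det := hZ.det_pos.ne'.isUnit
  have hX : (S⁻¹).PosDef := hS.inv
  have hSh : Sᴴ = S := hS.1.eq
  have hRh : Rᴴ = R := hR.1.eq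
  -- the blocks
  set SA := S * A with hSA
  set AS := Aᵀ * S with hAS
  set sl := Real.sqrt lam with hsl
  set sl2 := Real.sqrt (1 - lam) with hsl2
  set B1 : Matrix (Fin n) (Fin n ⊕ Fin n) ℝ := fromCols (sl • SA) (sl2 • SA) with hB1def
  set B1t : Matrix (Fin n ⊕ Fin n) (Fin n) ℝ := fromRows (sl • AS) (sl2 • AS) with hB1tdef
  have hsmulH : ∀ c : ℝ, (c • (S * A))ᴴ = c • (Aᵀ * S) := by
    intro c
    rw [conjTranspose_smul, conjTranspose_mul, hSh]
    simp [conjTranspose_eq_transpose_of_trivial]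
  have hB1 : B1ᴴ = B1t := by
    rw [hB1def, hB1tdef, hSA, hAS, conjTranspose_fromCols_eq_fromRows_conjTranspose,
      hsmulH, hsmulH]
  set P22 : Matrix (Fin n ⊕ Fin n) (Fin n ⊕ Fin n) ℝ :=
    fromBlocks (S + Cᵀ * R⁻¹ * C) 0 0 S with hP22def
  set P : Matrix (Fin n ⊕ (Fin n ⊕ Fin n)) (Fin n ⊕ (Fin n ⊕ Fin n)) ℝ :=
    fromBlocks S B1 B1t P22 with hPdef
  set Bb : Matrix (Fin n ⊕ (Fin n ⊕ Fin n)) (Fin n ⊕ Fin m) ℝ :=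
    fromBlocks S 0 0 (fromRows (Cᵀ * R⁻¹) 0) with hBbdef
  set Bbt : Matrix (Fin n ⊕ Fin m) (Fin n ⊕ (Fin n ⊕ Fin n)) ℝ :=
    fromBlocks S 0 0 (fromCols (R⁻¹ * C) 0) with hBbtdef
  have hCR : (Cᵀ * R⁻¹)ᴴ = R⁻¹ * C := by
    rw [conjTranspose_mul, Matrix.conjTranspose_nonsing_inv, hRh]
    simp [conjTranspose_eq_transpose_of_trivial]
  have hBb : Bbᴴ = Bbt := by
    rw [hBbdef, hBbtdef, fromBlocks_conjTranspose, hSh,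
      conjTranspose_fromRows_eq_fromCols_conjTranspose, hCR]
    simp
  set Dd : Matrix (Fin n ⊕ Fin m) (Fin n ⊕ Fin m) ℝ :=
    fromBlocks Q⁻¹ 0 0 (Y + R⁻¹) with hDddef
  set e : ((Fin n ⊕ (Fin n ⊕ Fin n)) ⊕ (Fin n ⊕ Fin m)) ≃
      (Fin n ⊕ (Fin n ⊕ (Fin n ⊕ (Fin n ⊕ Fin m)))) :=
    (Equiv.sumAssoc (Fin n) (Fin n ⊕ Fin n) (Fin n ⊕ Fin m)).trans
      (Equiv.sumCongr (Equiv.refl (Fin n)) (Equiv.sumAssoc (Fin n) (Fin n) (Fin n ⊕ Fin m)))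
    with hedef
  have h0 : (Psi A Q C R lam S Y).submatrix e e = fromBlocks P Bb Bbt Dd := by
    ext i j
    rcases i with (i | i | i) | (i | i) <;> rcases j with (j | j | j) | (j | j) <;>
      simp [Psi, hedef, hPdef, hP22def, hBbdef, hBbtdef, hDddef, hB1def, hB1tdef, hSA, hAS,
        hsl, hsl2, Equiv.sumAssoc, fromBlocks, fromRows_apply_inl, fromRows_apply_inr, fromCols_apply_inl, fromCols_apply_inr, Matrix.submatrix_apply,
        Matrix.smul_apply, Matrix.add_apply]
  have hPsiIff : (Psi A Q C R lam S Y).PosSemidef ↔ (fromBlocks P Bb Bbt Dd).PosSemidef := by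
    rw [← h0, posSemidef_submatrix_equiv]
  have hDdPD : Dd.PosDef := by rw [hDddef]; exact posDef_fromBlocks_diag hQ.inv hZ
  haveI : Invertible Dd := hDdPD.isUnit.invertible
  have step1 : (fromBlocks P Bb Bbt Dd).PosSemidef ↔ (P - Bb * Dd⁻¹ * Bbᴴ).PosSemidef := by
    rw [← hBb]
    exact PosDef.fromBlocks₂₂ P Bb hDdPD
  have hDdinv : Dd⁻¹ = fromBlocks Q 0 0 (Y + R⁻¹)⁻¹ := by
    rw [hDddef, inv_fromBlocks_diag hQ.inv.det_pos.ne'.isUnit hZd,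
      Matrix.nonsing_inv_nonsing_inv Q hQd]
  have hYinv : Y⁻¹⁻¹ = Y := Matrix.nonsing_inv_nonsing_inv Y hYd
  have key1 : (R + Y⁻¹)⁻¹ = R⁻¹ - R⁻¹ * (Y + R⁻¹)⁻¹ * R⁻¹ := by
    have h := Matrix.add_mul_mul_inv_eq_sub R 1 Y⁻¹ 1 hR.isUnit hY.inv.isUnit
      (by rw [hYinv]; simpa using hZ.isUnit)
    simpa [hYinv] using h
  set G := S + Cᵀ * (R + Y⁻¹)⁻¹ * C with hGdef
  have hE : Bb * Dd⁻¹ * Bbᴴ =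
      fromBlocks (S * Q * S) 0 0 (fromBlocks (Cᵀ * R⁻¹ * (Y + R⁻¹)⁻¹ * (R⁻¹ * C)) 0 0 0) := by
    rw [hBb, hDdinv, hBbdef, hBbtdef]
    simp only [fromBlocks_multiply, Matrix.zero_mul, Matrix.mul_zero, add_zero, zero_add,
      fromRows_mul, Matrix.mul_fromCols, fromRows_zero]
    rw [fromColumns_fromRows_zero]
  have hGw : S + Cᵀ * R⁻¹ * C - Cᵀ * R⁻¹ * (Y + R⁻¹)⁻¹ * (R⁻¹ * C) = G := by
    rw [hGdef, key1]
    simp only [Matrix.mul_sub, Matrix.sub_mul, Matrix.mul_assoc]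
    abel
  have hstep1eq : P - Bb * Dd⁻¹ * Bbᴴ =
      fromBlocks (S - S * Q * S) B1 B1t (fromBlocks G 0 0 S) := by
    rw [hE, hPdef, hP22def, fromBlocksSub, fromBlocksSub, hGw]
    simp
  have hCW : (Cᵀ * (R + Y⁻¹)⁻¹ * C).PosSemidef := by
    have h := hW.inv.posSemidef.conjTranspose_mul_mul_same (B := C)
    simpa [conjTranspose_eq_transpose_of_trivial] using h
  have hG : G.PosDef := by rw [hGdef]; exact hS.add_posSemidef hCW
  have hD2 : (fromBlocks G 0 0 S).PosDef := posDef_fromBlocks_diag hG hS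
  haveI : Invertible (fromBlocks G 0 0 S) := hD2.isUnit.invertible
  have step2 : (fromBlocks (S - S * Q * S) B1 B1t (fromBlocks G 0 0 S)).PosSemidef ↔
      (S - S * Q * S - B1 * (fromBlocks G 0 0 S)⁻¹ * B1ᴴ).PosSemidef := by
    rw [← hB1]
    exact PosDef.fromBlocks₂₂ _ B1 hD2
  have hD2inv : (fromBlocks G 0 0 S)⁻¹ = fromBlocks G⁻¹ 0 0 S⁻¹ :=
    inv_fromBlocks_diag hG.det_pos.ne'.isUnit hSd
  have hlam2 : sl * sl = lam := Real.mul_self_sqrt hl0.le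
  have hlam2' : sl2 * sl2 = 1 - lam := Real.mul_self_sqrt (by linarith)
  have hprod2 : B1 * (fromBlocks G 0 0 S)⁻¹ * B1ᴴ =
      lam • (S * A * G⁻¹ * (Aᵀ * S)) + (1 - lam) • (S * A * S⁻¹ * (Aᵀ * S)) := by
    rw [hB1, hD2inv, hB1def, hB1tdef, hSA, hAS, fromCols_mul_fromBlocks,
      fromCols_mul_fromRows]
    simp only [Matrix.mul_zero, Matrix.zero_mul, add_zero, zero_add, Matrix.smul_mul,
      Matrix.mul_smul, smul_smul, hlam2, hlam2']
  have hXh : (S⁻¹)ᴴ = S⁻¹ := hX.1.eq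
  have hWinv : (R + Y⁻¹)⁻¹⁻¹ = R + Y⁻¹ := Matrix.nonsing_inv_nonsing_inv _ hWd
  have hCXC : (C * S⁻¹ * Cᵀ).PosSemidef := by
    have h := hX.posSemidef.mul_mul_conjTranspose_same (B := C)
    simpa [conjTranspose_eq_transpose_of_trivial] using h
  have hV : (C * S⁻¹ * Cᵀ + (R + Y⁻¹)).PosDef := Matrix.PosDef.posSemidef_add hCXC hW
  have key2 : G⁻¹ = S⁻¹ - S⁻¹ * Cᵀ * (C * S⁻¹ * Cᵀ + (R + Y⁻¹))⁻¹ * C * S⁻¹ := by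
    have h := Matrix.add_mul_mul_inv_eq_sub S Cᵀ (R + Y⁻¹)⁻¹ C hS.isUnit hW.inv.isUnit
      (by rw [hWinv, add_comm]; exact hV.isUnit)
    rw [hGdef]
    rw [hWinv, add_comm (R + Y⁻¹) (C * S⁻¹ * Cᵀ)] at h
    exact h
  have c1 : ∀ (B : Matrix (Fin n) (Fin n) ℝ), S⁻¹ * (S * B) = B := fun B =>
    Matrix.nonsing_inv_mul_cancel_left S B hSd
  have c2 : S * S⁻¹ = 1 := Matrix.mul_nonsing_inv S hSd
  have c3 : S⁻¹ * S = 1 := Matrix.nonsing_inv_mul S hSd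
  have hfinal : S⁻¹ * (S - S * Q * S -
        (lam • (S * A * G⁻¹ * (Aᵀ * S)) + (1 - lam) • (S * A * S⁻¹ * (Aᵀ * S)))) * S⁻¹ =
      S⁻¹ - gRic A Q C (R + Y⁻¹) lam S⁻¹ := by
    rw [gRic, key2]
    simp only [Matrix.mul_sub, Matrix.sub_mul, Matrix.mul_add, Matrix.add_mul, Matrix.smul_mul,
      Matrix.mul_smul, smul_sub, Matrix.mul_assoc, c1, c2, c3, Matrix.mul_one, Matrix.one_mul]
    module
  calc (Psi A Q C R lam S Y).PosSemidef
      ↔ (fromBlocks P Bb Bbt Dd).PosSemidef := hPsiIff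
    _ ↔ (P - Bb * Dd⁻¹ * Bbᴴ).PosSemidef := step1
    _ ↔ (fromBlocks (S - S * Q * S) B1 B1t (fromBlocks G 0 0 S)).PosSemidef := by
        rw [hstep1eq]
    _ ↔ (S - S * Q * S - B1 * (fromBlocks G 0 0 S)⁻¹ * B1ᴴ).PosSemidef := step2
    _ ↔ (S - S * Q * S -
          (lam • (S * A * G⁻¹ * (Aᵀ * S)) + (1 - lam) • (S * A * S⁻¹ * (Aᵀ * S)))).PosSemidef := by
        rw [hprod2]
    _ ↔ (S⁻¹ * (S - S * Q * S -
          (lam • (S * A * G⁻¹ * (Aᵀ * S)) + (1 - lam) • (S * A * S⁻¹ * (Aᵀ * S)))) * S⁻¹).PosSemidef :=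
        (psd_congr hX hXh).symm
    _ ↔ (S⁻¹ - gRic A Q C (R + Y⁻¹) lam S⁻¹).PosSemidef := by rw [hfinal]

/-- Core feasibility equivalence of Theorem 2 (Appendix D): there exists
`0 < X ≤ M` with `g_{λ,R+Y⁻¹}(X) ≤ X` iff there exists `S > 0` with
`Ψ(S,Y) ≥ 0` and `[[S, I],[I, M]] ≥ 0`. -/
theorem sdp_feasibility_equiv {n m : ℕ}
    (A : Matrix (Fin n) (Fin n) ℝ) (Q : Matrix (Fin n) (Fin n) ℝ)
    (C : Matrix (Fin m) (Fin n) ℝ) (R : Matrix (Fin m) (Fin m) ℝ)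
    (M : Matrix (Fin n) (Fin n) ℝ) (Y : Matrix (Fin m) (Fin m) ℝ) (lam : ℝ)
    (hQ : Q.PosDef) (hR : R.PosDef) (hM : M.PosDef) (hY : Y.PosDef)
    (hlam : lam ∈ Set.Ioc (0 : ℝ) 1) :
    (∃ X : Matrix (Fin n) (Fin n) ℝ, X.PosDef ∧ (M - X).PosSemidef ∧
        (X - gRic A Q C (R + Y⁻¹) lam X).PosSemidef) ↔
      (∃ S : Matrix (Fin n) (Fin n) ℝ, S.PosDef ∧
        (Psi A Q C R lam S Y).PosSemidef ∧
        (Matrix.fromBlocks S (1 : Matrix (Fin n) (Fin n) ℝ)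
          (1 : Matrix (Fin n) (Fin n) ℝ) M).PosSemidef) := by
  constructor
  · rintro ⟨X, hX, hMX, hg⟩
    have hXd : IsUnit X.det := hX.det_pos.ne'.isUnit
    have hXinv : X⁻¹⁻¹ = X := Matrix.nonsing_inv_nonsing_inv X hXd
    refine ⟨X⁻¹, hX.inv, ?_, ?_⟩
    · rw [psi_iff A Q C R Y lam hQ hR hY hlam hX.inv, hXinv]
      exact hg
    · haveI := hX.inv.isUnit.invertible
      have h1 : (fromBlocks X⁻¹ (1 : Matrix (Fin n) (Fin n) ℝ) (1 : Matrix (Fin n) (Fin n) ℝ) M)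
          = fromBlocks X⁻¹ 1 ((1 : Matrix (Fin n) (Fin n) ℝ)ᴴ) M := by
        rw [conjTranspose_one]
      rw [h1, Matrix.PosDef.fromBlocks₁₁ (1 : Matrix (Fin n) (Fin n) ℝ) M hX.inv]
      simpa [hXinv] using hMX
  · rintro ⟨S, hS, hPsi, hBlk⟩
    have hSd : IsUnit S.det := hS.det_pos.ne'.isUnit
    haveI := hS.isUnit.invertible
    refine ⟨S⁻¹, hS.inv, ?_, (psi_iff A Q C R Y lam hQ hR hY hlam hS).1 hPsi⟩
    have h1 : (fromBlocks S (1 : Matrix (Fin n) (Fin n) ℝ) (1 : Matrix (Fin n) (Fin n) ℝ) M)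
        = fromBlocks S 1 ((1 : Matrix (Fin n) (Fin n) ℝ)ᴴ) M := by
      rw [conjTranspose_one]
    rw [h1, Matrix.PosDef.fromBlocks₁₁ (1 : Matrix (Fin n) (Fin n) ℝ) M hS] at hBlk
    simpa using hBlk
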